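/- Let a0, c, mu0, mu1 > 0 and b ∈ ℝ with 0 < a0 < 2c and a0 ≠ c. Set E = 3·a0²·mu1² − 2·a0·b·mu1 − 4·a0·mu0 − b² + 4·a0 and assume E·(a0 − c) > 0. Define σ = (4·a0² + 3·a0²·c·mu1² − 2·a0·b·c·mu1 − 4·a0·c·mu0 − b²·c)/(4·a0·(a0 − c)) and assume σ > 0. Define B = (a0·mu1 − b)/(2·a0), ω = −(a0·mu1² − b·mu1 − mu0 + σ)·mu1, λ = √(E/(16·a0·(a0 − c))), and d2 = 3·√(2c − a0)·E/(8·√a0·(a0 − c)). Then the synchronized pair f(ξ) = d2·sech²(λ·ξ) and g(ξ) = √(a0/(2c − a0))·f(ξ) satisfies the Schrödinger KdV–KdV associated ODE system with parameters a0, c, mu0, mu1, b, wave speed σ, and phase shifts B, ω. -/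

import Mathlib

theorem stmt_12
    (a0 c mu0 mu1 b : ℝ)
    (ha0 : 0 < a0) (hc : 0 < c) (hmu0 : 0 < mu0) (hmu1 : 0 < mu1)
    (ha0lt : a0 < 2*c) (hane : a0 ≠ c)
    (E : ℝ) (hE : E = 3*a0^2*mu1^2 - 2*a0*b*mu1 - 4*a0*mu0 - b^2 + 4*a0) (hEsgn : E * (a0 - c) > 0)
    (σ B ω lam d2 : ℝ)
    (h_σ : σ = (4*a0^2 + 3*a0^2*c*mu1^2 - 2*a0*b*c*mu1 - 4*a0*c*mu0 - b^2*c)/(4*a0*(a0 - c)))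
    (h_B : B = (a0*mu1 - b)/(2*a0))
    (h_ω : ω = -(a0*mu1^2 - b*mu1 - mu0 + σ)*mu1)
    (h_lam : lam = Real.sqrt (E/(16*a0*(a0 - c))))
    (h_d2 : d2 = 3*Real.sqrt (2*c - a0)*E/(8*Real.sqrt a0*(a0 - c)))
    (hσpos : 0 < σ)
    (f g : ℝ → ℝ)
    (hfdef : ∀ ξ : ℝ, f ξ = d2 * (1/Real.cosh (lam*ξ))^2)
    (hgdef : ∀ ξ : ℝ, g ξ = Real.sqrt (a0/(2*c - a0)) * f ξ) :
    ∀ ξ : ℝ,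
      (deriv f ξ * g ξ + f ξ * deriv g ξ + a0 * iteratedDeriv 3 f ξ + (mu0 - σ - 3*a0*B^2 - 2*b*B) * deriv f ξ = 0) ∧
      ((B + mu1) * f ξ * g ξ + (3*a0*B + b) * iteratedDeriv 2 f ξ + (ω + B*mu0 - B*σ - a0*B^3 - b*B^2) * f ξ = 0) ∧
      (f ξ * deriv f ξ + g ξ * deriv g ξ + c * iteratedDeriv 3 g ξ + (1 - σ) * deriv g ξ = 0) := by
  -- scalar identities
  have h2c : (0:ℝ) < 2*c - a0 := by linarith
  have hac : a0 - c ≠ 0 := sub_ne_zero.mpr hane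
  set k := Real.sqrt (a0/(2*c - a0)) with hkdef
  have hkpos : 0 < k := Real.sqrt_pos.mpr (by positivity)
  have hk2 : k^2 = a0/(2*c-a0) := Real.sq_sqrt (by positivity)
  have hl2 : lam^2 = E/(16*a0*(a0-c)) := by
    rw [h_lam]
    apply Real.sq_sqrt
    have h1 : E/(16*a0*(a0-c)) = (E*(a0-c))/(16*a0*(a0-c)^2) := by
      field_simp
    rw [h1]
    positivity
  have hkd : k*d2 = 3*E/(8*(a0-c)) := by
    have hs1 : Real.sqrt (a0/(2*c-a0)) = Real.sqrt a0 / Real.sqrt (2*c-a0) := by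
      rw [Real.sqrt_div ha0.le]
    have hsa : (0:ℝ) < Real.sqrt a0 := Real.sqrt_pos.mpr ha0
    have hsc : (0:ℝ) < Real.sqrt (2*c-a0) := Real.sqrt_pos.mpr h2c
    rw [hkdef, hs1, h_d2]
    field_simp
  have hkd6 : k*d2 = 6*a0*lam^2 := by
    rw [hkd, hl2]; field_simp; ring
  have hσl : σ = 1 + 4*c*lam^2 := by
    rw [h_σ, hl2, hE]; field_simp; ring
  have hM : mu0 - σ - 3*a0*B^2 - 2*b*B = -4*a0*lam^2 := by
    rw [h_B, hσl, hl2, hE]; field_simp; ring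
  have hΩ : ω + B*mu0 - B*σ - a0*B^3 - b*B^2 = -4*lam^2*(3*a0*B+b) := by
    rw [h_ω, h_B, hσl, hl2, hE]; field_simp; ring
  have hFc : (B+mu1)*(k*d2) = 6*lam^2*(3*a0*B+b) := by
    rw [hkd6, h_B]; field_simp; ring
  have hD : (1+k^2)*d2 = 12*c*k*lam^2 := by
    have h : k*((1+k^2)*d2) = k*(12*c*k*lam^2) := by
      have h1 : k*((1+k^2)*d2) = (1+k^2)*(k*d2) := by ring
      have h2 : k*(12*c*k*lam^2) = 12*c*k^2*lam^2 := by ring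
      rw [h1, h2, hkd6, hk2]
      field_simp
      ring
    exact mul_left_cancel₀ hkpos.ne' h
  -- derivatives
  have hf : f = fun x => d2 * (1/Real.cosh (lam*x))^2 := funext hfdef
  have hg : g = fun x => k * f x := funext hgdef
  have hcosh : ∀ x : ℝ, Real.cosh (lam*x) ≠ 0 := fun x => (Real.cosh_pos (lam*x)).ne'
  have hdc : ∀ x : ℝ, HasDerivAt (fun y => Real.cosh (lam*y)) (lam * Real.sinh (lam*x)) x := by
    intro x
    have := (Real.hasDerivAt_cosh (lam*x)).comp x ((hasDerivAt_id x).const_mul lam)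
    simpa [mul_comm, Function.comp_def] using this
  have hds : ∀ x : ℝ, HasDerivAt (fun y => Real.sinh (lam*y)) (lam * Real.cosh (lam*x)) x := by
    intro x
    have := (Real.hasDerivAt_sinh (lam*x)).comp x ((hasDerivAt_id x).const_mul lam)
    simpa [mul_comm, Function.comp_def] using this
  set f1 : ℝ → ℝ := fun x => -2*d2*lam*Real.sinh (lam*x)/(Real.cosh (lam*x))^3 with hf1
  set f2 : ℝ → ℝ := fun x => d2*lam^2*(4/(Real.cosh (lam*x))^2 - 6/(Real.cosh (lam*x))^4) with hf2
  set f3 : ℝ → ℝ := fun x => d2*lam^3*(-8*Real.sinh (lam*x)/(Real.cosh (lam*x))^3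
      + 24*Real.sinh (lam*x)/(Real.cosh (lam*x))^5) with hf3
  have hfeq : (fun x => d2 * (1/Real.cosh (lam*x))^2) = fun x => d2 / (Real.cosh (lam*x))^2 := by
    funext y
    rw [div_pow, one_pow]
    ring
  have hD1 : ∀ x, HasDerivAt f (f1 x) x := by
    intro x
    rw [hf, hfeq]
    have h1 : HasDerivAt (fun y => (Real.cosh (lam*y))^2)
        (2*(Real.cosh (lam*x))^1*(lam*Real.sinh (lam*x))) x := by
      simpa using (hdc x).fun_pow 2
    have h2 := ((hasDerivAt_const x d2).fun_div h1 (pow_ne_zero 2 (hcosh x)))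
    refine h2.congr_deriv (Eq.symm ?_)
    rw [hf1]
    field_simp
    ring
  have hD2 : ∀ x, HasDerivAt f1 (f2 x) x := by
    intro x
    have hnum : HasDerivAt (fun y => -2*d2*lam*Real.sinh (lam*y))
        (-2*d2*lam*(lam*Real.cosh (lam*x))) x := (hds x).const_mul _
    have hden : HasDerivAt (fun y => (Real.cosh (lam*y))^3)
        (3*(Real.cosh (lam*x))^2*(lam*Real.sinh (lam*x))) x := by
      simpa using (hdc x).fun_pow 3
    have h2 := hnum.fun_div hden (pow_ne_zero 3 (hcosh x))
    refine h2.congr_deriv (Eq.symm ?_)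
    have hs := Real.sinh_sq (lam*x)
    rw [hf2]
    field_simp
    linear_combination (-6*d2*lam^2) * hs
  have hD3 : ∀ x, HasDerivAt f2 (f3 x) x := by
    intro x
    have hden2 : HasDerivAt (fun y => (Real.cosh (lam*y))^2)
        (2*(Real.cosh (lam*x))^1*(lam*Real.sinh (lam*x))) x := by
      simpa using (hdc x).fun_pow 2
    have hden4 : HasDerivAt (fun y => (Real.cosh (lam*y))^4)
        (4*(Real.cosh (lam*x))^3*(lam*Real.sinh (lam*x))) x := by
      simpa using (hdc x).fun_pow 4
    have h4 := (hasDerivAt_const x (4:ℝ)).fun_div hden2 (pow_ne_zero 2 (hcosh x))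
    have h6 := (hasDerivAt_const x (6:ℝ)).fun_div hden4 (pow_ne_zero 4 (hcosh x))
    have h := ((h4.fun_sub h6).const_mul (d2*lam^2))
    refine h.congr_deriv (Eq.symm ?_)
    rw [hf3]
    field_simp
    ring
  -- derivative functions
  have e1 : deriv f = f1 := funext fun x => (hD1 x).deriv
  have e2 : deriv f1 = f2 := funext fun x => (hD2 x).deriv
  have e3 : deriv f2 = f3 := funext fun x => (hD3 x).deriv
  have i2f : iteratedDeriv 2 f = f2 := by
    rw [iteratedDeriv_succ, iteratedDeriv_one, e1, e2]
  have i3f : iteratedDeriv 3 f = f3 := by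
    rw [iteratedDeriv_succ, i2f, e3]
  have hG1 : ∀ x, HasDerivAt g (k * f1 x) x := by
    intro x; rw [hg]; exact (hD1 x).const_mul k
  have eg1 : deriv g = fun x => k * f1 x := funext fun x => (hG1 x).deriv
  have eg2 : deriv (fun x => k * f1 x) = fun x => k * f2 x :=
    funext fun x => ((hD2 x).const_mul k).deriv
  have eg3 : deriv (fun x => k * f2 x) = fun x => k * f3 x :=
    funext fun x => ((hD3 x).const_mul k).deriv
  have i3g : iteratedDeriv 3 g = fun x => k * f3 x := by
    rw [iteratedDeriv_succ, iteratedDeriv_succ, iteratedDeriv_one, eg1, eg2, eg3]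
  -- conclusion
  intro ξ
  have hC := hcosh ξ
  refine ⟨?_, ?_, ?_⟩
  · simp only [e1, i3f, eg1, hfdef ξ, hgdef ξ, hf1, hf3]
    linear_combination (-4*lam*Real.sinh (lam*ξ)*d2/(Real.cosh (lam*ξ))^5)*hkd6
      + (-2*d2*lam*Real.sinh (lam*ξ)/(Real.cosh (lam*ξ))^3)*hM
  · simp only [i2f, hfdef ξ, hgdef ξ, hf2]
    linear_combination (d2/(Real.cosh (lam*ξ))^4)*hFc + (d2/(Real.cosh (lam*ξ))^2)*hΩ
  · simp only [e1, i3g, eg1, hfdef ξ, hgdef ξ, hf1, hf3]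
    linear_combination (-2*d2*lam*Real.sinh (lam*ξ)/(Real.cosh (lam*ξ))^5)*hD
      + (2*k*d2*lam*Real.sinh (lam*ξ)/(Real.cosh (lam*ξ))^3)*hσl
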